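/- For every (b,d) ∈ P, i.e. 0 < b < d, there exists an integer H ≥ 3 such that for every integer h ≥ H there exists a real number φ with 1/(4h) < φ < 1/(2h) and F( cos(2πφ), T_h(cos(2πφ)), b, d ) < 0. -/

import Mathlib

open Real

noncomputable def F (x y b d : ℝ) : ℝ :=
  -b*d*x^2 + (b*d^2*y - b*(b+d) - d*(b+1)*(b+2*d))*x + b*d*(b+d)*y + (b+1)*(b+d)*(b+2*d)

noncomputable def cheb (h : ℕ) (x : ℝ) : ℝ := (Polynomial.Chebyshev.T ℝ h).eval x

/-- Large-`N` limit of the discrete instability criterion: for `(b,d) ∈ P` and all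
sufficiently large `h`, there is a spatial frequency `φ ∈ (1/(4h), 1/(2h))` with
`F(cos(2πφ), T_h(cos(2πφ)), b, d) < 0`. -/
theorem large_N_instability (b d : ℝ) (hb : 0 < b) (hbd : b < d) :
    ∃ H : ℕ, 3 ≤ H ∧ ∀ h : ℕ, H ≤ h →
      ∃ φ : ℝ, 1/(4*(h : ℝ)) < φ ∧ φ < 1/(2*(h : ℝ)) ∧
        F (cos (2*π*φ)) (cheb h (cos (2*π*φ))) b d < 0 := by
  have hd : 0 < d := hb.trans hbd
  set y0 : ℝ := -(1 + b/d)/2 with hy0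
  have hbd' : 0 < b/d := div_pos hb hd
  have hbd1 : b/d < 1 := (div_lt_one hd).2 hbd
  have hy0_gt : -1 < y0 := by rw [hy0]; linarith
  have hy0_lt : y0 < 0 := by rw [hy0]; linarith
  set θ0 : ℝ := Real.arccos y0 with hθ0
  have hcos : cos θ0 = y0 := Real.cos_arccos hy0_gt.le (by linarith)
  have hθpi : θ0 ≤ π := Real.arccos_le_pi y0
  have hθgt : π/2 < θ0 := by
    rw [hθ0, Real.arccos_eq_pi_div_two_sub_arcsin]
    have : Real.arcsin y0 < 0 := Real.arcsin_lt_zero.2 hy0_lt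
    linarith
  have hθlt : θ0 < π := by
    rcases lt_or_eq_of_le hθpi with h | h
    · exact h
    · exfalso
      have : cos θ0 = -1 := by rw [h, Real.cos_pi]
      rw [hcos] at this; linarith
  have hθpos : 0 < θ0 := by linarith [Real.pi_pos]
  -- F at x = 1, y = y0 is negative
  have hF1 : F 1 y0 b d < 0 := by
    have hF1eq : F 1 y0 b d = -(b*(b+2*d)*(d-b))/2 := by
      rw [F, hy0]; field_simp; ring
    rw [hF1eq]
    have : 0 < b*(b+2*d)*(d-b) := by nlinarith [mul_pos (mul_pos hb (by linarith : (0:ℝ) < b+2*d)) (by linarith : (0:ℝ) < d-b)]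
    linarith
  -- continuity: F (cos (θ0/h)) y0 b d → F 1 y0 b d
  have htend : Filter.Tendsto (fun h : ℕ => F (cos (θ0 / h)) y0 b d)
      Filter.atTop (nhds (F 1 y0 b d)) := by
    have h1 : Filter.Tendsto (fun h : ℕ => θ0 / h) Filter.atTop (nhds 0) :=
      tendsto_const_div_atTop_nhds_zero_nat θ0
    have h2 : Filter.Tendsto (fun h : ℕ => cos (θ0 / h)) Filter.atTop (nhds 1) := by
      have := (Real.continuous_cos.tendsto 0).comp h1
      simpa [Function.comp_def] using this
    have hFc : Continuous fun x : ℝ => F x y0 b d := by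
      unfold F; continuity
    have := (hFc.tendsto 1).comp h2
    simpa [Function.comp_def] using this
  have hev : ∀ᶠ h : ℕ in Filter.atTop, F (cos (θ0 / h)) y0 b d < 0 :=
    htend.eventually (eventually_lt_nhds hF1)
  obtain ⟨H0, hH0⟩ := Filter.eventually_atTop.1 hev
  refine ⟨max H0 3, le_max_right _ _, fun h hh => ?_⟩
  have hh3 : 3 ≤ h := le_trans (le_max_right _ _) hh
  have hhpos : (0:ℝ) < h := by exact_mod_cast lt_of_lt_of_le (by norm_num) hh3
  have hπ : (0:ℝ) < π := Real.pi_pos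
  refine ⟨θ0 / (2*π*h), ?_, ?_, ?_⟩
  · rw [div_lt_div_iff₀ (by positivity) (by positivity)]
    nlinarith
  · rw [div_lt_div_iff₀ (by positivity) (by positivity)]
    nlinarith
  · have hφ : 2*π*(θ0 / (2*π*h)) = θ0 / h := by
      field_simp
    rw [hφ]
    have hcheb : cheb h (cos (θ0 / h)) = y0 := by
      rw [cheb, Polynomial.Chebyshev.T_real_cos]
      rw [← hcos]
      congr 1
      push_cast
      field_simp
    rw [hcheb]
    exact hH0 h (le_trans (le_max_left _ _) hh)
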